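/- Let N ∈ ℕ, t_i = -1 + (i-2)/N for i = 1,…,2N+3, δ_i(u) = N(σ(u - t_{i-1}) - 2σ(u - t_i) + σ(u - t_{i+1})) for i = 2,…,2N+2 with σ(u) = max{u,0}, and L_t(f)(u) = ∑_{i=2}^{2N+2} f(t_i) δ_i(u). Then for every continuous g on [-1,1], ‖L_t(g) - g‖_{C[-1,1]} ≤ 2ω(g, 1/N), where ω(g,μ) = sup{|g(v) - g(v+t)| : |t| ≤ μ, v, v+t ∈ [-1,1]} is the modulus of continuity. -/

import Mathlib

/-- The ReLU function. -/
def relu (u : ℝ) : ℝ := max u 0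

/-- The uniform mesh points `t_i = -1 + (i-2)/N`. -/
noncomputable def meshT (N i : ℕ) : ℝ := -1 + ((i : ℝ) - 2) / N

/-- The hat functions `δ_i(u) = N(σ(u-t_{i-1}) - 2σ(u-t_i) + σ(u-t_{i+1}))`. -/
noncomputable def hatDelta (N i : ℕ) (u : ℝ) : ℝ :=
  N * (relu (u - meshT N (i - 1)) - 2 * relu (u - meshT N i) + relu (u - meshT N (i + 1)))

/-- The quasi-interpolation operator `L_t(f)(u) = ∑_{i=2}^{2N+2} f(t_i) δ_i(u)`. -/
noncomputable def Lt (N : ℕ) (f : ℝ → ℝ) (u : ℝ) : ℝ :=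
  ∑ i ∈ Finset.Icc 2 (2 * N + 2), f (meshT N i) * hatDelta N i u

/-- The modulus of continuity of `g` on `[-1,1]`. -/
noncomputable def modCont (g : ℝ → ℝ) (μ : ℝ) : ℝ :=
  sSup {a : ℝ | ∃ v t : ℝ, |t| ≤ μ ∧ v ∈ Set.Icc (-1 : ℝ) 1 ∧
    v + t ∈ Set.Icc (-1 : ℝ) 1 ∧ a = |g v - g (v + t)|}

lemma relu_of_nonpos {x : ℝ} (h : x ≤ 0) : relu x = 0 := max_eq_right h

lemma relu_of_nonneg {x : ℝ} (h : 0 ≤ x) : relu x = x := max_eq_left h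

lemma meshT_mono (N : ℕ) (hN : 1 ≤ N) {a b : ℕ} (h : a ≤ b) :
    meshT N a ≤ meshT N b := by
  have hN' : (0:ℝ) < N := by exact_mod_cast Nat.lt_of_lt_of_le Nat.zero_lt_one hN
  have hab : (a:ℝ) ≤ b := by exact_mod_cast h
  unfold meshT
  gcongr

lemma hat_zero_left (N : ℕ) (hN : 1 ≤ N) (i : ℕ) (u : ℝ)
    (h : u ≤ meshT N (i - 1)) : hatDelta N i u = 0 := by
  have h1 : meshT N (i-1) ≤ meshT N i := meshT_mono N hN (Nat.sub_le i 1)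
  have h2 : meshT N i ≤ meshT N (i+1) := meshT_mono N hN (Nat.le_succ i)
  unfold hatDelta
  rw [relu_of_nonpos (by linarith), relu_of_nonpos (by linarith),
    relu_of_nonpos (by linarith)]
  ring

lemma hat_zero_right (N : ℕ) (hN : 1 ≤ N) (i : ℕ) (hi : 1 ≤ i) (u : ℝ)
    (h : meshT N (i + 1) ≤ u) : hatDelta N i u = 0 := by
  have h1 : meshT N (i-1) ≤ meshT N i := meshT_mono N hN (Nat.sub_le i 1)
  have h2 : meshT N i ≤ meshT N (i+1) := meshT_mono N hN (Nat.le_succ i)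
  unfold hatDelta
  rw [relu_of_nonneg (by linarith), relu_of_nonneg (by linarith),
    relu_of_nonneg (by linarith)]
  have hc : ((i - 1 : ℕ) : ℝ) = (i:ℝ) - 1 := by
    rw [Nat.cast_sub hi]; simp
  unfold meshT
  rw [hc]
  push_cast
  ring

theorem Lt_approx (N : ℕ) (hN : 1 ≤ N) (g : ℝ → ℝ)
    (hg : ContinuousOn g (Set.Icc (-1 : ℝ) 1)) :
    ∀ u ∈ Set.Icc (-1 : ℝ) 1, |Lt N g u - g u| ≤ 2 * modCont g (1 / N) := by
  intro u hu
  obtain ⟨hu1, hu2⟩ := hu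
  have hNpos : (0:ℝ) < N := by exact_mod_cast Nat.lt_of_lt_of_le Nat.zero_lt_one hN
  set ω := modCont g (1 / N) with hω
  -- boundedness of the modulus set
  obtain ⟨C, hC⟩ := IsCompact.exists_bound_of_continuousOn isCompact_Icc hg
  have hbdd : BddAbove {a : ℝ | ∃ v t : ℝ, |t| ≤ 1/(N:ℝ) ∧ v ∈ Set.Icc (-1 : ℝ) 1 ∧
      v + t ∈ Set.Icc (-1 : ℝ) 1 ∧ a = |g v - g (v + t)|} := by
    refine ⟨2 * C, ?_⟩
    rintro a ⟨v, t, ht, hv, hvt, rfl⟩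
    have h1 := hC v hv
    have h2 := hC (v + t) hvt
    calc |g v - g (v + t)| ≤ |g v| + |g (v + t)| := abs_sub _ _
      _ ≤ 2 * C := by
        simp only [Real.norm_eq_abs] at h1 h2; linarith
  have key : ∀ v t : ℝ, |t| ≤ 1/(N:ℝ) → v ∈ Set.Icc (-1 : ℝ) 1 →
      v + t ∈ Set.Icc (-1 : ℝ) 1 → |g v - g (v + t)| ≤ ω := by
    intro v t ht hv hvt
    exact le_csSup hbdd ⟨v, t, ht, hv, hvt, rfl⟩
  have hω0 : 0 ≤ ω := by
    have := key 0 0 (by simp) (by norm_num) (by norm_num)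
    simpa using this
  -- choose the cell index
  set k : ℕ := min (⌊(N:ℝ) * (u + 1)⌋₊) (2 * N - 1) with hk
  have hk3 : k ≤ 2 * N - 1 := min_le_right _ _
  have hk1 : (k:ℝ) ≤ (N:ℝ) * (u + 1) := by
    have h1 : (k:ℝ) ≤ (⌊(N:ℝ) * (u + 1)⌋₊ : ℝ) := by
      exact_mod_cast min_le_left _ _
    have h2 : (⌊(N:ℝ) * (u + 1)⌋₊ : ℝ) ≤ (N:ℝ) * (u + 1) :=
      Nat.floor_le (by nlinarith)
    linarith
  have hk2 : (N:ℝ) * (u + 1) ≤ (k:ℝ) + 1 := by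
    rcases le_or_gt (⌊(N:ℝ) * (u + 1)⌋₊) (2 * N - 1) with h | h
    · have hke : k = ⌊(N:ℝ) * (u + 1)⌋₊ := min_eq_left h
      rw [hke]
      exact le_of_lt (Nat.lt_floor_add_one _)
    · have hke : k = 2 * N - 1 := min_eq_right (le_of_lt h)
      have hkc : (k:ℝ) = 2 * (N:ℝ) - 1 := by
        rw [hke, Nat.cast_sub (by omega)]; push_cast; ring
      rw [hkc]; nlinarith
  -- mesh values
  have hm1 : meshT N (k+1) = -1 + ((k:ℝ) - 1) / N := by unfold meshT; push_cast; ring_nf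
  have hm2 : meshT N (k+2) = -1 + (k:ℝ) / N := by unfold meshT; push_cast; ring_nf
  have hm3 : meshT N (k+3) = -1 + ((k:ℝ) + 1) / N := by unfold meshT; push_cast; ring_nf
  have hlo : meshT N (k+2) ≤ u := by
    rw [hm2]
    have : (k:ℝ) / N ≤ u + 1 := (div_le_iff₀ hNpos).mpr (by nlinarith)
    linarith
  have hhi : u ≤ meshT N (k+3) := by
    rw [hm3]
    have : u + 1 ≤ ((k:ℝ) + 1) / N := (le_div_iff₀ hNpos).mpr (by nlinarith)
    linarith
  have hdiff : meshT N (k+3) - meshT N (k+2) = 1 / N := by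
    rw [hm2, hm3]; field_simp; ring
  -- evaluate the sum
  have hsub : ({k+2, k+3} : Finset ℕ) ⊆ Finset.Icc 2 (2*N+2) := by
    intro i hi
    simp only [Finset.mem_insert, Finset.mem_singleton] at hi
    simp only [Finset.mem_Icc]
    omega
  have hLt : Lt N g u = g (meshT N (k+2)) * hatDelta N (k+2) u
      + g (meshT N (k+3)) * hatDelta N (k+3) u := by
    unfold Lt
    rw [← Finset.sum_subset hsub]
    · rw [Finset.sum_pair (by omega)]
    · intro i hi hi2
      simp only [Finset.mem_insert, Finset.mem_singleton] at hi2
      push_neg at hi2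
      simp only [Finset.mem_Icc] at hi
      rcases lt_or_ge i (k+2) with h | h
      · rw [hat_zero_right N hN i (by omega) u
          (le_trans (meshT_mono N hN (by omega : i + 1 ≤ k + 2)) hlo)]
        ring
      · rw [hat_zero_left N hN i u
          (le_trans hhi (meshT_mono N hN (by omega : k + 3 ≤ i - 1)))]
        ring
  -- hat function values on the cell
  have hm12 : meshT N (k+1) ≤ meshT N (k+2) := meshT_mono N hN (by omega)
  have hd1 : hatDelta N (k+2) u = (N:ℝ) * (meshT N (k+3) - u) := by
    unfold hatDelta
    have e1 : k + 2 - 1 = k + 1 := rfl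
    rw [e1, relu_of_nonneg (by linarith), relu_of_nonneg (by linarith),
      relu_of_nonpos (by linarith)]
    rw [hm1, hm2, hm3]
    ring
  have hd2 : hatDelta N (k+3) u = (N:ℝ) * (u - meshT N (k+2)) := by
    unfold hatDelta
    have e1 : k + 3 - 1 = k + 2 := rfl
    have hm34 : meshT N (k+3) ≤ meshT N (k+3+1) := meshT_mono N hN (by omega)
    rw [e1, relu_of_nonneg (by linarith), relu_of_nonpos (by linarith),
      relu_of_nonpos (by linarith)]
    ring
  set a := (N:ℝ) * (meshT N (k+3) - u) with ha'
  set b := (N:ℝ) * (u - meshT N (k+2)) with hb'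
  have hab : a + b = 1 := by
    rw [ha', hb']
    have : a + b = (N:ℝ) * (meshT N (k+3) - meshT N (k+2)) := by rw [ha', hb']; ring
    rw [ha', hb'] at this
    rw [this, hdiff]
    field_simp
  have ha0 : 0 ≤ a := by rw [ha']; nlinarith
  have hb0 : 0 ≤ b := by rw [hb']; nlinarith
  -- mesh points lie in [-1,1]
  have hmesh2_mem : meshT N (k+2) ∈ Set.Icc (-1:ℝ) 1 := by
    constructor
    · have h2 : meshT N 2 = -1 := by unfold meshT; norm_num
      have := meshT_mono N hN (by omega : 2 ≤ k + 2)
      linarith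
    · linarith [hu2, hlo]
  have hmesh3_mem : meshT N (k+3) ∈ Set.Icc (-1:ℝ) 1 := by
    constructor
    · linarith [hu1, hhi]
    · have h2 : meshT N (2*N+2) = 1 := by
        unfold meshT; push_cast; field_simp; ring
      have := meshT_mono N hN (by omega : k + 3 ≤ 2*N + 2)
      linarith
  -- modulus bounds
  have hx : |g (meshT N (k+2)) - g u| ≤ ω := by
    have heq : meshT N (k+2) + (u - meshT N (k+2)) = u := by ring
    have ht : |u - meshT N (k+2)| ≤ 1/(N:ℝ) := by
      rw [abs_of_nonneg (by linarith)]
      linarith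
    have h := key (meshT N (k+2)) (u - meshT N (k+2)) ht hmesh2_mem
      (by rw [heq]; exact ⟨hu1, hu2⟩)
    rwa [heq] at h
  have hy : |g (meshT N (k+3)) - g u| ≤ ω := by
    have heq : meshT N (k+3) + (u - meshT N (k+3)) = u := by ring
    have ht : |u - meshT N (k+3)| ≤ 1/(N:ℝ) := by
      rw [abs_of_nonpos (by linarith), neg_sub]
      linarith
    have h := key (meshT N (k+3)) (u - meshT N (k+3)) ht hmesh3_mem
      (by rw [heq]; exact ⟨hu1, hu2⟩)
    rwa [heq] at h
  -- final estimate
  have hdecomp : Lt N g u - g u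
      = a * (g (meshT N (k+2)) - g u) + b * (g (meshT N (k+3)) - g u) := by
    rw [hLt, hd1, hd2]
    linear_combination g u * hab
  rw [hdecomp]
  calc |a * (g (meshT N (k+2)) - g u) + b * (g (meshT N (k+3)) - g u)|
      ≤ |a * (g (meshT N (k+2)) - g u)| + |b * (g (meshT N (k+3)) - g u)| := abs_add_le _ _
    _ = a * |g (meshT N (k+2)) - g u| + b * |g (meshT N (k+3)) - g u| := by
        rw [abs_mul a, abs_mul b, abs_of_nonneg ha0, abs_of_nonneg hb0]
    _ ≤ a * ω + b * ω := add_le_add (mul_le_mul_of_nonneg_left hx ha0)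
        (mul_le_mul_of_nonneg_left hy hb0)
    _ = ω := by rw [← add_mul, hab, one_mul]
    _ ≤ 2 * ω := by linarith
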